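/- The four Bell states of C²⊗C², given with equal prior probabilities 1/4, satisfy I_acc^LOCC ≤ 1 < 2 = H_s. In particular, no LOCC protocol can perfectly distinguish the four Bell states, since perfect discrimination would require accessible information equal to 2 bits. -/
import Mathlib


open Matrix
open scoped Kronecker ComplexOrder

noncomputable section

namespace LAI

/-- Shannon entropy (base 2) of a finitely supported distribution. -/
def shannon {α : Type*} [Fintype α] (p : α → ℝ) : ℝ :=
  -∑ a, p a * Real.logb 2 (p a)

open scoped Classical in
/-- von Neumann entropy (base 2) of a matrix (via eigenvalues of a Hermitian matrix). -/
def vN {n : Type*} [Fintype n] [DecidableEq n] (ρ : Matrix n n ℂ) : ℝ :=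
  if h : ρ.IsHermitian then -∑ i, h.eigenvalues i * Real.logb 2 (h.eigenvalues i) else 0

/-- Partial trace over the second subsystem. -/
def trB {α β : Type*} [Fintype β] (ρ : Matrix (α × β) (α × β) ℂ) : Matrix α α ℂ :=
  Matrix.of fun i j => ∑ k, ρ (i, k) (j, k)

/-- Partial trace over the first subsystem. -/
def trA {α β : Type*} [Fintype α] (ρ : Matrix (α × β) (α × β) ℂ) : Matrix β β ℂ :=
  Matrix.of fun i j => ∑ k, ρ (k, i) (k, j)

/-- Classical mutual information `I(X:Y)` of a joint distribution `P`. -/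
def mi {α β : Type*} [Fintype α] [Fintype β] (P : α → β → ℝ) : ℝ :=
  shannon (fun a => ∑ b, P a b) + shannon (fun b => ∑ a, P a b)
    - shannon (fun ab : α × β => P ab.1 ab.2)

/-- The Holevo quantity `χ` of the ensemble `{p x, ρ x}`. -/
def holevo {X n : Type*} [Fintype X] [Fintype n] [DecidableEq n]
    (p : X → ℝ) (ρ : X → Matrix n n ℂ) : ℝ :=
  vN (∑ x, (p x : ℂ) • ρ x) - ∑ x, p x * vN (ρ x)

/-- The rank-one projector `|u⟩⟨u|` onto a vector `u`. -/
def proj {n : Type*} (u : n → ℂ) : Matrix n n ℂ :=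
  Matrix.vecMulVec u (star u)

/-- A density matrix: positive semidefinite with unit trace. -/
def IsState {n : Type*} [Fintype n] (ρ : Matrix n n ℂ) : Prop :=
  ρ.PosSemidef ∧ ρ.trace = 1

/-- Quantum mutual information of a bipartite state, `S(ρ_A) + S(ρ_B) - S(ρ_AB)`. -/
def qmi {α β : Type*} [Fintype α] [DecidableEq α] [Fintype β] [DecidableEq β]
    (ρ : Matrix (α × β) (α × β) ℂ) : ℝ :=
  vN (trB ρ) + vN (trA ρ) - vN ρ

/-- A (finite-depth, adaptive) LOCC measurement protocol on a bipartite system `A ⊗ B`: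
a tree of alternating local measurements, where each local measurement is given by
Kraus operators and each branch may depend on all previous outcomes
(which are communicated classically). -/
inductive LOCC (A B : Type) [Fintype A] [DecidableEq A] [Fintype B] [DecidableEq B] : Type
  | finish : LOCC A B
  | alice (k : ℕ) (V : Fin k → Matrix A A ℂ)
      (hV : ∑ a, (V a)ᴴ * V a = 1)
      (next : Fin k → LOCC A B) : LOCC A B
  | bob (k : ℕ) (W : Fin k → Matrix B B ℂ)
      (hW : ∑ b, (W b)ᴴ * W b = 1)
      (next : Fin k → LOCC A B) : LOCC A B

namespace LOCC

variable {A B : Type} [Fintype A] [DecidableEq A] [Fintype B] [DecidableEq B]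

/-- The possible (complete) outcome records of an LOCC protocol. -/
def records : LOCC A B → Finset (List ℕ)
  | .finish => {[]}
  | .alice k _ _ next =>
      Finset.univ.biUnion fun a : Fin k => (records (next a)).image (List.cons a.val)
  | .bob k _ _ next =>
      Finset.univ.biUnion fun b : Fin k => (records (next b)).image (List.cons b.val)

/-- The probability that a given LOCC protocol, applied to the state `ρ`, produces the
outcome record `r` (computed via unnormalized post-measurement states). -/
def outP : LOCC A B → Matrix (A × B) (A × B) ℂ → List ℕ → ℝ
  | .finish, ρ, [] => ρ.trace.re
  | .finish, _, _ :: _ => 0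
  | .alice k V _ next, ρ, a :: l =>
      if h : a < k then
        outP (next ⟨a, h⟩)
          ((V ⟨a, h⟩ ⊗ₖ (1 : Matrix B B ℂ)) * ρ * (V ⟨a, h⟩ ⊗ₖ (1 : Matrix B B ℂ))ᴴ) l
      else 0
  | .alice _ _ _ _, _, [] => 0
  | .bob k W _ next, ρ, b :: l =>
      if h : b < k then
        outP (next ⟨b, h⟩)
          (((1 : Matrix A A ℂ) ⊗ₖ W ⟨b, h⟩) * ρ * ((1 : Matrix A A ℂ) ⊗ₖ W ⟨b, h⟩)ᴴ) l
      else 0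
  | .bob _ _ _ _, _, [] => 0

/-- The classical mutual information between the signal label of the ensemble `{p x, ρ x}`
and the full record of outcomes of the LOCC protocol `P`. -/
def info {X : Type*} [Fintype X] (P : LOCC A B) (p : X → ℝ)
    (ρ : X → Matrix (A × B) (A × B) ℂ) : ℝ :=
  shannon p
    + (-∑ r ∈ P.records, (∑ x, p x * P.outP (ρ x) r)
          * Real.logb 2 (∑ x, p x * P.outP (ρ x) r))
    - (-∑ x, ∑ r ∈ P.records, (p x * P.outP (ρ x) r)
          * Real.logb 2 (p x * P.outP (ρ x) r))

end LOCC

/-- Entanglement of formation: minimal average entanglement (entropy of the reduction)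
over pure-state decompositions. -/
def EoF {A B : Type*} [Fintype A] [DecidableEq A] [Fintype B] [DecidableEq B]
    (ρ : Matrix (A × B) (A × B) ℂ) : ℝ :=
  sInf { e | ∃ (k : ℕ) (q : Fin k → ℝ) (ψ : Fin k → (A × B → ℂ)),
    (∀ i, 0 ≤ q i) ∧ (∑ i, q i = 1) ∧
    (∀ i, ∑ v, Complex.normSq (ψ i v) = 1) ∧
    ρ = ∑ i, (q i : ℂ) • proj (ψ i) ∧
    e = ∑ i, q i * vN (trB (proj (ψ i))) }

open scoped Classical in
/-- Matrix logarithm (base 2) of a Hermitian matrix, via the spectral decomposition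
(with the convention `log 0 = 0`). -/
def matLog2 {n : Type*} [Fintype n] [DecidableEq n] (ρ : Matrix n n ℂ) : Matrix n n ℂ :=
  if h : ρ.IsHermitian then
    (h.eigenvectorUnitary : Matrix n n ℂ)
      * Matrix.diagonal (fun i => (Real.logb 2 (h.eigenvalues i) : ℂ))
      * (star (h.eigenvectorUnitary : Matrix n n ℂ))
  else 0

/-- Quantum relative entropy (base 2), `S(ρ‖σ) = tr(ρ log₂ ρ − ρ log₂ σ)`. -/
def relEnt {n : Type*} [Fintype n] [DecidableEq n] (ρ σ : Matrix n n ℂ) : ℝ :=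
  (Matrix.trace (ρ * matLog2 ρ - ρ * matLog2 σ)).re

/-- Separability of a bipartite state across the `A : B` cut. -/
def IsSep {A B : Type*} [Fintype A] [DecidableEq A] [Fintype B] [DecidableEq B]
    (σ : Matrix (A × B) (A × B) ℂ) : Prop :=
  ∃ (k : ℕ) (w : Fin k → ℝ) (ζA : Fin k → Matrix A A ℂ) (ζB : Fin k → Matrix B B ℂ),
    (∀ i, 0 ≤ w i) ∧ (∑ i, w i = 1) ∧
    (∀ i, IsState (ζA i)) ∧ (∀ i, IsState (ζB i)) ∧
    σ = ∑ i, (w i : ℂ) • (ζA i ⊗ₖ ζB i)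

/-- Relative entropy of entanglement across the `A : B` cut. -/
def REE {A B : Type*} [Fintype A] [DecidableEq A] [Fintype B] [DecidableEq B]
    (σ : Matrix (A × B) (A × B) ℂ) : ℝ :=
  sInf { r | ∃ ζ : Matrix (A × B) (A × B) ℂ, IsState ζ ∧ IsSep ζ ∧ r = relEnt σ ζ }

/-- Reshuffle a state of `(A ⊗ B) ⊗ (C ⊗ D)` into a state of `(A ⊗ C) ⊗ (B ⊗ D)`,
exhibiting the `AC : BD` cut. -/
def toACBD {A B C D : Type*} (ρ : Matrix ((A × B) × (C × D)) ((A × B) × (C × D)) ℂ) :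
    Matrix ((A × C) × (B × D)) ((A × C) × (B × D)) ℂ :=
  ρ.submatrix (fun x => ((x.1.1, x.2.1), (x.1.2, x.2.2)))
    (fun x => ((x.1.1, x.2.1), (x.1.2, x.2.2)))

/-- Binary entropy (base 2). -/
def binEnt (p : ℝ) : ℝ := -(p * Real.logb 2 p) - (1 - p) * Real.logb 2 (1 - p)

end LAI

namespace LAI

/-- The four Bell states `(|00⟩ ± |11⟩)/√2`, `(|01⟩ ± |10⟩)/√2` of `ℂ² ⊗ ℂ²`. -/
def bell (x : Fin 4) : Fin 2 × Fin 2 → ℂ := fun ij =>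
  (((Real.sqrt 2)⁻¹ : ℝ) : ℂ) *
    (if x.val ≤ 1 then
      (if ij = (0, 0) then 1 else if ij = (1, 1) then (if x.val = 0 then 1 else -1) else 0)
    else
      (if ij = (0, 1) then 1 else if ij = (1, 0) then (if x.val = 2 then 1 else -1) else 0))


/-! ### Auxiliary lemmas -/

section Aux

lemma quad (a b c d : ℂ) :
    Complex.normSq (a*b + c*d) + Complex.normSq (a*b - c*d)
      + Complex.normSq (a*d + c*b) + Complex.normSq (a*d - c*b)
    = 2 * (Complex.normSq a + Complex.normSq c) * (Complex.normSq b + Complex.normSq d) := by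
  simp only [Complex.normSq_apply, Complex.add_re, Complex.add_im, Complex.sub_re,
    Complex.sub_im, Complex.mul_re, Complex.mul_im]
  ring

lemma cs2 (a b c d : ℂ) :
    Complex.normSq (a*b + c*d)
      ≤ (Complex.normSq a + Complex.normSq c) * (Complex.normSq b + Complex.normSq d) := by
  have h1 := sq_nonneg (a.re*d.re + a.im*d.im - b.re*c.re - b.im*c.im)
  have h2 := sq_nonneg (a.im*d.re - a.re*d.im - b.re*c.im + b.im*c.re)
  simp only [Complex.normSq_apply, Complex.add_re, Complex.add_im, Complex.mul_re, Complex.mul_im]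
  nlinarith [h1, h2]

lemma cs2m (a b c d : ℂ) :
    Complex.normSq (a*b - c*d)
      ≤ (Complex.normSq a + Complex.normSq c) * (Complex.normSq b + Complex.normSq d) := by
  have := cs2 a b (-c) d
  simpa [sub_eq_add_neg, neg_mul] using this

lemma proj_conj {n : Type*} [Fintype n] (K : Matrix n n ℂ) (u : n → ℂ) :
    K * proj u * Kᴴ = proj (K.mulVec u) := by
  ext i j
  simp only [proj, mul_apply, vecMulVec_apply, conjTranspose_apply, mulVec, dotProduct,
    Pi.star_apply, Finset.sum_mul, Finset.mul_sum, star_sum, star_mul', RCLike.star_def]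
  exact Finset.sum_congr rfl fun k _ => Finset.sum_congr rfl fun l _ => by ring

lemma trace_proj_re {n : Type*} [Fintype n] (u : n → ℂ) :
    ((proj u).trace).re = ∑ i, Complex.normSq (u i) := by
  simp [proj, Matrix.trace, Matrix.diag, vecMulVec_apply, Complex.mul_conj, Complex.re_sum]

lemma kron_conjTranspose {m n : Type*} (A : Matrix m m ℂ) (B : Matrix n n ℂ) :
    (A ⊗ₖ B)ᴴ = Aᴴ ⊗ₖ Bᴴ := by
  ext i j
  simp [conjTranspose_apply, kroneckerMap_apply, mul_comm]

lemma sum_kron_one {m n k : Type*} [Fintype k] [Fintype n] [DecidableEq n]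
    (V : k → Matrix m m ℂ) :
    ∑ a, (V a) ⊗ₖ (1 : Matrix n n ℂ) = (∑ a, V a) ⊗ₖ (1 : Matrix n n ℂ) := by
  ext i j
  simp [kroneckerMap_apply, Finset.sum_apply, Finset.sum_mul, Matrix.sum_apply]

/-- The probability of Bell state `x` surviving the local filter `M ⊗ N`. -/
def tq (M N : Matrix (Fin 2) (Fin 2) ℂ) (x : Fin 4) : ℝ :=
  ((proj ((M ⊗ₖ N).mulVec (bell x))).trace).re

def bc (x : Fin 4) (M N : Matrix (Fin 2) (Fin 2) ℂ) (i j : Fin 2) : ℂ :=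
  if x.val ≤ 1 then M i 0 * N j 0 + (if x.val = 0 then 1 else -1) * (M i 1 * N j 1)
  else M i 0 * N j 1 + (if x.val = 2 then 1 else -1) * (M i 1 * N j 0)

lemma mulVec_bell (M N : Matrix (Fin 2) (Fin 2) ℂ) (x : Fin 4) (i j : Fin 2) :
    ((M ⊗ₖ N).mulVec (bell x)) (i, j) = (((Real.sqrt 2)⁻¹ : ℝ) : ℂ) * bc x M N i j := by
  fin_cases x <;>
    simp [mulVec, dotProduct, Fintype.sum_prod_type, Fin.sum_univ_two, bell, bc,
      kroneckerMap_apply, Prod.ext_iff] <;> ring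

lemma nsq_half (z : ℂ) :
    Complex.normSq ((((Real.sqrt 2)⁻¹ : ℝ) : ℂ) * z) = 2⁻¹ * Complex.normSq z := by
  rw [Complex.normSq_mul, Complex.normSq_ofReal]
  have : (Real.sqrt 2)⁻¹ * (Real.sqrt 2)⁻¹ = 2⁻¹ := by
    rw [← mul_inv, Real.mul_self_sqrt (by norm_num)]
  rw [this]

lemma tq_eq (M N : Matrix (Fin 2) (Fin 2) ℂ) (x : Fin 4) :
    tq M N x = 2⁻¹ * ∑ i : Fin 2, ∑ j : Fin 2, Complex.normSq (bc x M N i j) := by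
  simp only [tq, trace_proj_re, Fintype.sum_prod_type, mulVec_bell, nsq_half]
  rw [Fin.sum_univ_two]
  simp only [Fin.sum_univ_two]
  ring

lemma tq_nonneg (M N : Matrix (Fin 2) (Fin 2) ℂ) (x : Fin 4) : 0 ≤ tq M N x := by
  rw [tq, trace_proj_re]
  exact Finset.sum_nonneg fun _ _ => Complex.normSq_nonneg _

lemma tq_key (M N : Matrix (Fin 2) (Fin 2) ℂ) (x : Fin 4) :
    2 * tq M N x ≤ ∑ y : Fin 4, tq M N y := by
  simp only [Fin.sum_univ_four, tq_eq, Fin.sum_univ_two]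
  have q1 := quad (M 0 0) (N 0 0) (M 0 1) (N 0 1)
  have q2 := quad (M 0 0) (N 1 0) (M 0 1) (N 1 1)
  have q3 := quad (M 1 0) (N 0 0) (M 1 1) (N 0 1)
  have q4 := quad (M 1 0) (N 1 0) (M 1 1) (N 1 1)
  fin_cases x <;>
    simp only [bc, show ((0:Fin 4):ℕ)=0 from rfl, show ((1:Fin 4):ℕ)=1 from rfl,
      show ((2:Fin 4):ℕ)=2 from rfl, show ((3:Fin 4):ℕ)=3 from rfl] <;>
    norm_num [← sub_eq_add_neg]
  · linarith [cs2 (M 0 0) (N 0 0) (M 0 1) (N 0 1), cs2 (M 0 0) (N 1 0) (M 0 1) (N 1 1),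
      cs2 (M 1 0) (N 0 0) (M 1 1) (N 0 1), cs2 (M 1 0) (N 1 0) (M 1 1) (N 1 1)]
  · linarith [cs2m (M 0 0) (N 0 0) (M 0 1) (N 0 1), cs2m (M 0 0) (N 1 0) (M 0 1) (N 1 1),
      cs2m (M 1 0) (N 0 0) (M 1 1) (N 0 1), cs2m (M 1 0) (N 1 0) (M 1 1) (N 1 1)]
  · linarith [cs2 (M 0 0) (N 0 1) (M 0 1) (N 0 0), cs2 (M 0 0) (N 1 1) (M 0 1) (N 1 0),
      cs2 (M 1 0) (N 0 1) (M 1 1) (N 0 0), cs2 (M 1 0) (N 1 1) (M 1 1) (N 1 0)]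
  · linarith [cs2m (M 0 0) (N 0 1) (M 0 1) (N 0 0), cs2m (M 0 0) (N 1 1) (M 0 1) (N 1 0),
      cs2m (M 1 0) (N 0 1) (M 1 1) (N 0 0), cs2m (M 1 0) (N 1 1) (M 1 1) (N 1 0)]

lemma bell_trace (x : Fin 4) : ((proj (bell x)).trace).re = 1 := by
  rw [trace_proj_re]
  fin_cases x <;>
    simp [bell, Fintype.sum_prod_type, Fin.sum_univ_two, nsq_half] <;> norm_num [nsq_half]

/-- Structure of LOCC outcome probabilities on the Bell ensemble: along any branch
the four probabilities are those of a common local filter `M' ⊗ N'`. -/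
lemma outP_invariant (P : LOCC (Fin 2) (Fin 2)) :
    ∀ (M N : Matrix (Fin 2) (Fin 2) ℂ), ∀ r ∈ P.records,
      ∃ M' N', ∀ x, P.outP (proj ((M ⊗ₖ N).mulVec (bell x))) r = tq M' N' x := by
  induction P with
  | finish =>
      intro M N r hr
      simp only [LOCC.records, Finset.mem_singleton] at hr
      subst hr
      exact ⟨M, N, fun x => rfl⟩
  | alice k V hV next ih =>
      intro M N r hr
      simp only [LOCC.records, Finset.mem_biUnion, Finset.mem_image, Finset.mem_univ,
        true_and] at hr
      obtain ⟨a, l, hl, rfl⟩ := hr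
      obtain ⟨M', N', h⟩ := ih a (V a * M) N l hl
      refine ⟨M', N', fun x => ?_⟩
      have hak : (a : ℕ) < k := a.isLt
      simp only [LOCC.outP, hak, dif_pos, Fin.eta]
      rw [proj_conj, Matrix.mulVec_mulVec, ← Matrix.mul_kronecker_mul, one_mul]
      exact h x
  | bob k W hW next ih =>
      intro M N r hr
      simp only [LOCC.records, Finset.mem_biUnion, Finset.mem_image, Finset.mem_univ,
        true_and] at hr
      obtain ⟨b, l, hl, rfl⟩ := hr
      obtain ⟨M', N', h⟩ := ih b M (W b * N) l hl
      refine ⟨M', N', fun x => ?_⟩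
      have hbk : (b : ℕ) < k := b.isLt
      simp only [LOCC.outP, hbk, dif_pos, Fin.eta]
      rw [proj_conj, Matrix.mulVec_mulVec, ← Matrix.mul_kronecker_mul, one_mul]
      exact h x

/-- Total probability over complete records is the trace. -/
lemma sum_outP (P : LOCC (Fin 2) (Fin 2)) :
    ∀ ρ : Matrix ((Fin 2) × (Fin 2)) ((Fin 2) × (Fin 2)) ℂ,
      ∑ r ∈ P.records, P.outP ρ r = ρ.trace.re := by
  induction P with
  | finish => intro ρ; simp [LOCC.records, LOCC.outP]
  | alice k V hV next ih =>
      intro ρ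
      have hdisj : Set.PairwiseDisjoint (↑(Finset.univ : Finset (Fin k)))
          (fun a : Fin k => (LOCC.records (next a)).image (List.cons a.val)) := by
        intro a _ b _ hab
        simp only [Function.onFun, Finset.disjoint_left, Finset.mem_image]
        rintro r ⟨l, _, rfl⟩ ⟨l', _, h⟩
        cases Fin.val_injective (List.head_eq_of_cons_eq h.symm); exact hab rfl
      rw [LOCC.records, Finset.sum_biUnion hdisj]
      have hrow : ∀ a : Fin k,
          ∑ r ∈ (LOCC.records (next a)).image (List.cons a.val),
              LOCC.outP (.alice k V hV next) ρ r
            = (((V a ⊗ₖ (1 : Matrix (Fin 2) (Fin 2) ℂ)) * ρ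
                * (V a ⊗ₖ (1 : Matrix (Fin 2) (Fin 2) ℂ))ᴴ).trace).re := by
        intro a
        rw [Finset.sum_image (fun x _ y _ h => List.cons_injective h)]
        rw [← ih a]
        refine Finset.sum_congr rfl fun l _ => ?_
        have hak : (a : ℕ) < k := a.isLt
        simp only [LOCC.outP, hak, dif_pos, Fin.eta]
      simp only [hrow]
      rw [← Complex.re_sum]
      congr 1
      have : ∀ a : Fin k,
          ((V a ⊗ₖ (1 : Matrix (Fin 2) (Fin 2) ℂ)) * ρ
              * (V a ⊗ₖ (1 : Matrix (Fin 2) (Fin 2) ℂ))ᴴ).trace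
            = (((V a)ᴴ * V a) ⊗ₖ (1 : Matrix (Fin 2) (Fin 2) ℂ) * ρ).trace := by
        intro a
        rw [Matrix.trace_mul_cycle, kron_conjTranspose, conjTranspose_one,
          ← Matrix.mul_kronecker_mul, one_mul]
      simp only [this]
      rw [← Matrix.trace_sum, ← Finset.sum_mul, sum_kron_one, hV,
        Matrix.one_kronecker_one, one_mul]
  | bob k W hW next ih =>
      intro ρ
      have hdisj : Set.PairwiseDisjoint (↑(Finset.univ : Finset (Fin k)))
          (fun b : Fin k => (LOCC.records (next b)).image (List.cons b.val)) := by
        intro a _ b _ hab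
        simp only [Function.onFun, Finset.disjoint_left, Finset.mem_image]
        rintro r ⟨l, _, rfl⟩ ⟨l', _, h⟩
        cases Fin.val_injective (List.head_eq_of_cons_eq h.symm); exact hab rfl
      rw [LOCC.records, Finset.sum_biUnion hdisj]
      have hrow : ∀ b : Fin k,
          ∑ r ∈ (LOCC.records (next b)).image (List.cons b.val),
              LOCC.outP (.bob k W hW next) ρ r
            = ((((1 : Matrix (Fin 2) (Fin 2) ℂ) ⊗ₖ W b) * ρ
                * ((1 : Matrix (Fin 2) (Fin 2) ℂ) ⊗ₖ W b)ᴴ).trace).re := by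
        intro b
        rw [Finset.sum_image (fun x _ y _ h => List.cons_injective h)]
        rw [← ih b]
        refine Finset.sum_congr rfl fun l _ => ?_
        have hbk : (b : ℕ) < k := b.isLt
        simp only [LOCC.outP, hbk, dif_pos, Fin.eta]
      simp only [hrow]
      rw [← Complex.re_sum]
      congr 1
      have : ∀ b : Fin k,
          (((1 : Matrix (Fin 2) (Fin 2) ℂ) ⊗ₖ W b) * ρ
              * ((1 : Matrix (Fin 2) (Fin 2) ℂ) ⊗ₖ W b)ᴴ).trace
            = ((1 : Matrix (Fin 2) (Fin 2) ℂ) ⊗ₖ ((W b)ᴴ * W b) * ρ).trace := by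
        intro b
        rw [Matrix.trace_mul_cycle, kron_conjTranspose, conjTranspose_one,
          ← Matrix.mul_kronecker_mul, one_mul]
      simp only [this]
      have hsum : ∑ b, (1 : Matrix (Fin 2) (Fin 2) ℂ) ⊗ₖ ((W b)ᴴ * W b)
          = (1 : Matrix (Fin 2) (Fin 2) ℂ) ⊗ₖ (∑ b, (W b)ᴴ * W b) := by
        ext i j
        simp [kroneckerMap_apply, Finset.sum_apply, Finset.mul_sum, Matrix.sum_apply]
      rw [← Matrix.trace_sum, ← Finset.sum_mul, hsum, hW,
        Matrix.one_kronecker_one, one_mul]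

lemma ent_bound (u : Fin 4 → ℝ) (h0 : ∀ x, 0 ≤ u x) (hk : ∀ x, 2 * u x ≤ ∑ y, u y) :
    (∑ x, u x * Real.logb 2 (u x)) - (∑ y, u y) * Real.logb 2 (∑ y, u y)
      ≤ -∑ y, u y := by
  have hq0 : 0 ≤ ∑ y, u y := Finset.sum_nonneg fun y _ => h0 y
  rcases eq_or_lt_of_le hq0 with h | h
  · have hz : ∀ x, u x = 0 := by
      intro x
      have := hk x
      have := h0 x
      linarith [h.symm ▸ this]
    simp [hz, ← h]
  · have step : ∀ x, u x * Real.logb 2 (u x) ≤ u x * Real.logb 2 (∑ y, u y) - u x := by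
      intro x
      rcases eq_or_lt_of_le (h0 x) with h1 | h1
      · simp [← h1]
      · have hle : u x ≤ (∑ y, u y) / 2 := by linarith [hk x]
        have hlog : Real.logb 2 (u x) ≤ Real.logb 2 ((∑ y, u y) / 2) :=
          Real.logb_le_logb_of_le (by norm_num) h1 hle
        have hd : Real.logb 2 ((∑ y, u y) / 2) = Real.logb 2 (∑ y, u y) - 1 := by
          rw [Real.logb_div (by linarith) (by norm_num),
            Real.logb_self_eq_one (by norm_num)]
        rw [hd] at hlog
        nlinarith [hlog, h1]
    have hcalc : (∑ x, u x * Real.logb 2 (u x))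
        ≤ (∑ y, u y) * Real.logb 2 (∑ y, u y) - ∑ y, u y := by
      calc (∑ x, u x * Real.logb 2 (u x))
          ≤ ∑ x, (u x * Real.logb 2 (∑ y, u y) - u x) :=
            Finset.sum_le_sum fun x _ => step x
        _ = (∑ y, u y) * Real.logb 2 (∑ y, u y) - ∑ y, u y := by
            rw [Finset.sum_sub_distrib, ← Finset.sum_mul]
    linarith

lemma shannon_uniform : shannon (fun _ : Fin 4 => (1 : ℝ) / 4) = 2 := by
  have h4 : Real.logb 2 ((1 : ℝ)/4) = -2 := by
    rw [show ((1:ℝ)/4) = ((2:ℝ)^(2:ℕ))⁻¹ by norm_num, Real.logb_inv, Real.logb_pow,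
      Real.logb_self_eq_one (by norm_num)]
    norm_num
  simp [shannon, Fin.sum_univ_four, h4]
  rw [show (4:ℝ) = (2:ℝ)^(2:ℕ) by norm_num, Real.logb_pow,
    Real.logb_self_eq_one (by norm_num)]
  norm_num

end Aux

/-- **Local indistinguishability of the four Bell states.** For the uniform ensemble of
the four Bell states the source entropy is `H_s = 2`, every LOCC protocol extracts mutual
information at most `1 < 2`, and in particular no LOCC protocol extracts the full `2` bits,
i.e. no LOCC protocol distinguishes the four Bell states perfectly. -/

theorem bell_states_locally_indistinguishable :
    shannon (fun _ : Fin 4 => (1 : ℝ) / 4) = 2 ∧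
    (∀ P : LOCC (Fin 2) (Fin 2),
      P.info (fun _ : Fin 4 => (1 : ℝ) / 4) (fun x => proj (bell x)) ≤ 1) ∧
    (1 : ℝ) < 2 ∧
    ¬ ∃ P : LOCC (Fin 2) (Fin 2),
        P.info (fun _ : Fin 4 => (1 : ℝ) / 4) (fun x => proj (bell x)) = 2 := by
  have hbound : ∀ P : LOCC (Fin 2) (Fin 2),
      P.info (fun _ : Fin 4 => (1 : ℝ) / 4) (fun x => proj (bell x)) ≤ 1 := by
    intro P
    have hout : ∀ r ∈ P.records, ∃ M' N', ∀ x : Fin 4,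
        P.outP (proj (bell x)) r = tq M' N' x := by
      intro r hr
      obtain ⟨M', N', h⟩ := outP_invariant P 1 1 r hr
      exact ⟨M', N', fun x => by
        simpa [Matrix.one_kronecker_one, Matrix.one_mulVec] using h x⟩
    have key : ∀ r ∈ P.records,
        (∑ x : Fin 4, ((1:ℝ)/4 * P.outP (proj (bell x)) r)
            * Real.logb 2 ((1:ℝ)/4 * P.outP (proj (bell x)) r))
          - (∑ x : Fin 4, (1:ℝ)/4 * P.outP (proj (bell x)) r)
            * Real.logb 2 (∑ x : Fin 4, (1:ℝ)/4 * P.outP (proj (bell x)) r)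
          ≤ -(∑ x : Fin 4, (1:ℝ)/4 * P.outP (proj (bell x)) r) := by
      intro r hr
      obtain ⟨M', N', h⟩ := hout r hr
      simp only [h]
      exact ent_bound (fun x => (1:ℝ)/4 * tq M' N' x)
        (fun x => by have := tq_nonneg M' N' x; linarith)
        (fun x => by
          have hk := tq_key M' N' x
          have : ∑ y : Fin 4, (1:ℝ)/4 * tq M' N' y = (1:ℝ)/4 * ∑ y : Fin 4, tq M' N' y :=
            (Finset.mul_sum _ _ _).symm
          rw [this]
          linarith)
    have h1 := Finset.sum_le_sum key
    rw [Finset.sum_sub_distrib] at h1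
    have htot : ∑ r ∈ P.records, ∑ x : Fin 4, (1:ℝ)/4 * P.outP (proj (bell x)) r = 1 := by
      rw [Finset.sum_comm]
      have hx : ∀ x : Fin 4, ∑ r ∈ P.records, P.outP (proj (bell x)) r = 1 := fun x => by
        rw [sum_outP]; exact bell_trace x
      have : ∀ x : Fin 4, ∑ r ∈ P.records, (1:ℝ)/4 * P.outP (proj (bell x)) r
          = (1:ℝ)/4 := by
        intro x
        rw [← Finset.mul_sum, hx x, mul_one]
      rw [Finset.sum_congr rfl fun x _ => this x]
      norm_num
    have hneg : ∑ r ∈ P.records, -(∑ x : Fin 4, (1:ℝ)/4 * P.outP (proj (bell x)) r)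
        = -1 := by
      rw [Finset.sum_neg_distrib, htot]
    rw [hneg] at h1
    have hsw : (∑ x : Fin 4, ∑ r ∈ P.records,
          ((1:ℝ)/4 * P.outP (proj (bell x)) r)
            * Real.logb 2 ((1:ℝ)/4 * P.outP (proj (bell x)) r))
        = ∑ r ∈ P.records, ∑ x : Fin 4,
          ((1:ℝ)/4 * P.outP (proj (bell x)) r)
            * Real.logb 2 ((1:ℝ)/4 * P.outP (proj (bell x)) r) :=
      Finset.sum_comm
    simp only [LOCC.info, shannon_uniform]
    linarith [h1, hsw]
  refine ⟨shannon_uniform, hbound, by norm_num, ?_⟩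
  rintro ⟨P, hP⟩
  have := hbound P
  linarith

end LAI
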